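/- arXiv:2108.02604 — 2 statements merged into one kernel-verified Lean document; each statement's English description precedes it below -/
import Mathlib

section
/- The cone \(\mathcal{H}^+\) of positive self-adjoint Hilbert-Schmidt operators is regular: every sequence \((A_n)_{n \in \mathbb{N}}\) in \(\mathcal{H}\) that is nondecreasing in the order induced by \(\mathcal{H}^+\) (i.e. \(A_{n+1} - A_n \in \mathcal{H}^+\) for all \(n\)) and bounded above by some \(A \in \mathcal{H}\) (i.e. \(A - A_n \in \mathcal{H}^+\) for all \(n\)) converges in the Hilbert-Schmidt norm. -/
open scoped RealInnerProductSpace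

open Filter Matrix

section Aux

private lemma abs_mul_le_half_sq (a c : ℝ) : |a * c| ≤ (a ^ 2 + c ^ 2) / 2 := by
  rw [abs_mul]
  nlinarith [abs_nonneg a, abs_nonneg c, sq_abs a, sq_abs c, sq_nonneg (|a| - |c|)]

open scoped MatrixOrder in
/-- The Frobenius pairing of two real positive semidefinite matrices is nonnegative. -/
private lemma psd_pairing_nonneg {m : Type*} [Fintype m] [DecidableEq m] {M N : Matrix m m ℝ}
    (hM : M.PosSemidef) (hN : N.PosSemidef) : 0 ≤ ∑ i, ∑ j, M i j * N i j := by
  have hsym : ∀ i j, N j i = N i j := fun i j => by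
    conv_lhs => rw [← hN.1]
    simp [Matrix.conjTranspose_apply]
  have h1 : ∑ i, ∑ j, M i j * N i j = Matrix.trace (M * N) := by
    simp only [Matrix.trace, Matrix.diag, Matrix.mul_apply]
    exact Finset.sum_congr rfl fun i _ => Finset.sum_congr rfl fun j _ => by rw [hsym]
  rw [h1]
  have hSH : (CFC.sqrt M).conjTranspose = CFC.sqrt M :=
    (Matrix.nonneg_iff_posSemidef.mp (CFC.sqrt_nonneg M)).1
  have key : (CFC.sqrt M * N * CFC.sqrt M).PosSemidef := by
    have := hN.mul_mul_conjTranspose_same (CFC.sqrt M)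
    rwa [hSH] at this
  have h2 : M * N = CFC.sqrt M * CFC.sqrt M * N := by rw [CFC.sqrt_mul_sqrt_self M hM.nonneg]
  rw [h2, ← Matrix.trace_mul_cycle]
  rw [Matrix.trace]
  apply Finset.sum_nonneg
  intro i _
  have h3 := key.dotProduct_mulVec_nonneg (Pi.single i 1)
  have h4 : (star (Pi.single i 1) : m → ℝ) ⬝ᵥ ((CFC.sqrt M * N * CFC.sqrt M) *ᵥ Pi.single i 1)
      = (CFC.sqrt M * N * CFC.sqrt M) i i := by
    simp [Matrix.mulVec_single, dotProduct, Pi.single_apply]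
  rw [h4] at h3
  simpa [Matrix.diag] using h3

variable {H : Type*} [NormedAddCommGroup H] [InnerProductSpace ℝ H] [CompleteSpace H]
variable {ι : Type*}

private lemma coeff_hasSum (b : HilbertBasis ι ℝ H) (u : H) :
    HasSum (fun j => ⟪u, b j⟫ ^ 2) (‖u‖ ^ 2) := by
  have h := b.hasSum_inner_mul_inner u u
  rw [real_inner_self_eq_norm_sq] at h
  have he : (fun j => ⟪u, b j⟫ ^ 2) = fun j => ⟪u, b j⟫ * ⟪b j, u⟫ :=
    funext fun j => by rw [sq, real_inner_comm (b j) u]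
  rw [he]
  exact h

private lemma entry_summable_sq (b : HilbertBasis ι ℝ H) {X : H →L[ℝ] H}
    (hX : Summable fun i => ‖X (b i)‖ ^ 2) :
    Summable (fun p : ι × ι => ⟪X (b p.1), b p.2⟫ ^ 2) := by
  refine (summable_prod_of_nonneg fun p => sq_nonneg _).2
    ⟨fun i => (coeff_hasSum b (X (b i))).summable, ?_⟩
  exact hX.congr fun i => ((coeff_hasSum b (X (b i))).tsum_eq).symm

private lemma pair_summable (b : HilbertBasis ι ℝ H) {X Y : H →L[ℝ] H}
    (hX : Summable fun i => ‖X (b i)‖ ^ 2) (hY : Summable fun i => ‖Y (b i)‖ ^ 2) :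
    Summable (fun p : ι × ι => ⟪X (b p.1), b p.2⟫ * ⟪Y (b p.1), b p.2⟫) := by
  apply Summable.of_abs
  exact Summable.of_nonneg_of_le (fun p => abs_nonneg _) (fun p => abs_mul_le_half_sq _ _)
    (((entry_summable_sq b hX).add (entry_summable_sq b hY)).div_const 2)

/-- The Hilbert-Schmidt pairing of two operators, expressed via matrix entries in a basis. -/
noncomputable def HSpair (b : HilbertBasis ι ℝ H) (X Y : H →L[ℝ] H) : ℝ :=
  ∑' p : ι × ι, ⟪X (b p.1), b p.2⟫ * ⟪Y (b p.1), b p.2⟫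

private lemma HSpair_comm (b : HilbertBasis ι ℝ H) (X Y : H →L[ℝ] H) :
    HSpair b X Y = HSpair b Y X :=
  tsum_congr fun p => mul_comm _ _

private lemma HSpair_sub_left (b : HilbertBasis ι ℝ H) {X Y Z : H →L[ℝ] H}
    (hX : Summable fun i => ‖X (b i)‖ ^ 2) (hY : Summable fun i => ‖Y (b i)‖ ^ 2)
    (hZ : Summable fun i => ‖Z (b i)‖ ^ 2) :
    HSpair b (X - Y) Z = HSpair b X Z - HSpair b Y Z := by
  unfold HSpair
  rw [← Summable.tsum_sub (pair_summable b hX hZ) (pair_summable b hY hZ)]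
  exact tsum_congr fun p => by
    simp only [ContinuousLinearMap.sub_apply, inner_sub_left, sub_mul]

private lemma HSpair_self (b : HilbertBasis ι ℝ H) {X : H →L[ℝ] H}
    (hX : Summable fun i => ‖X (b i)‖ ^ 2) :
    HSpair b X X = ∑' i, ‖X (b i)‖ ^ 2 := by
  unfold HSpair
  rw [Summable.tsum_prod (pair_summable b hX hX)]
  refine tsum_congr fun i => ?_
  have h : (fun j => ⟪X (b i), b j⟫ * ⟪X (b i), b j⟫) = fun j => ⟪X (b i), b j⟫ ^ 2 :=
    funext fun j => (sq _).symm
  rw [h, (coeff_hasSum b (X (b i))).tsum_eq]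

/-- The `s × s` Gram-type matrix of a positive symmetric operator is positive semidefinite. -/
private lemma matrix_psd (b : HilbertBasis ι ℝ H) {Z : H →L[ℝ] H}
    (hZsa : IsSelfAdjoint Z) (hZpos : ∀ h : H, 0 ≤ ⟪Z h, h⟫) (s : Finset ι) :
    Matrix.PosSemidef (Matrix.of fun i j : s => ⟪Z (b i), b j⟫) := by
  have hZsym := ContinuousLinearMap.isSelfAdjoint_iff_isSymmetric.mp hZsa
  have hsym' : ∀ u v : H, ⟪Z u, v⟫ = ⟪Z v, u⟫ := fun u v => by
    have h := hZsym u v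
    simp only [ContinuousLinearMap.coe_coe] at h
    rw [h, real_inner_comm]
  refine Matrix.PosSemidef.of_dotProduct_mulVec_nonneg ?_ ?_
  · ext i j
    simp only [Matrix.conjTranspose_apply, Matrix.of_apply, star_trivial]
    exact hsym' (b (j : ι)) (b (i : ι))
  · intro v
    set u : H := ∑ i : s, v i • (b i) with hu
    have key : (star v) ⬝ᵥ ((Matrix.of fun i j : s => ⟪Z (b i), b j⟫) *ᵥ v) = ⟪Z u, u⟫ := by
      rw [hu, map_sum, sum_inner]
      simp only [dotProduct, Matrix.mulVec, Matrix.of_apply, Pi.star_apply, star_trivial]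
      refine Finset.sum_congr rfl fun i _ => ?_
      rw [ContinuousLinearMap.map_smul, real_inner_smul_left, inner_sum, Finset.mul_sum,
        Finset.mul_sum]
      refine Finset.sum_congr rfl fun j _ => ?_
      rw [real_inner_smul_right]
      ring
    rw [key]
    exact hZpos u

private lemma HSpair_nonneg (b : HilbertBasis ι ℝ H) {X Y : H →L[ℝ] H}
    (hXsa : IsSelfAdjoint X) (hYsa : IsSelfAdjoint Y)
    (hXpos : ∀ h : H, 0 ≤ ⟪X h, h⟫) (hYpos : ∀ h : H, 0 ≤ ⟪Y h, h⟫)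
    (hX : Summable fun i => ‖X (b i)‖ ^ 2) (hY : Summable fun i => ‖Y (b i)‖ ^ 2) :
    0 ≤ HSpair b X Y := by
  classical
  set f : ι × ι → ℝ := fun p => ⟪X (b p.1), b p.2⟫ * ⟪Y (b p.1), b p.2⟫ with hf
  have hs : HasSum f (HSpair b X Y) := (pair_summable b hX hY).hasSum
  have hmono : Monotone (fun s : Finset ι => s ×ˢ s) := fun s t hst =>
    Finset.product_subset_product hst hst
  have hten : Tendsto (fun s : Finset ι => ∑ p ∈ s ×ˢ s, f p) atTop (nhds (HSpair b X Y)) :=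
    hs.comp (Filter.tendsto_atTop_finset_of_monotone hmono
      (fun p => ⟨{p.1, p.2}, by simp [Finset.mem_product]⟩))
  refine ge_of_tendsto' hten fun s => ?_
  have hsum : ∑ p ∈ s ×ˢ s, f p
      = ∑ i : s, ∑ j : s, (Matrix.of fun i j : s => ⟪X (b i), b j⟫) i j
        * (Matrix.of fun i j : s => ⟪Y (b i), b j⟫) i j := by
    rw [Finset.sum_product]
    rw [← Finset.sum_coe_sort s]
    refine Finset.sum_congr rfl fun i _ => ?_
    rw [← Finset.sum_coe_sort s]
    rfl
  rw [hsum]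
  exact psd_pairing_nonneg (matrix_psd b hXsa hXpos s) (matrix_psd b hYsa hYpos s)

private lemma cs_tsum {f g : ι → ℝ} (hf : ∀ i, 0 ≤ f i) (hg : ∀ i, 0 ≤ g i)
    (hf2 : Summable fun i => f i ^ 2) (hg2 : Summable fun i => g i ^ 2) :
    Summable (fun i => f i * g i) ∧
      ∑' i, f i * g i ≤ Real.sqrt (∑' i, f i ^ 2) * Real.sqrt (∑' i, g i ^ 2) := by
  have hsum : Summable fun i => f i * g i := by
    refine Summable.of_nonneg_of_le (fun i => mul_nonneg (hf i) (hg i)) (fun i => ?_)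
      ((hf2.add hg2).div_const 2)
    have h := abs_mul_le_half_sq (f i) (g i)
    rwa [abs_of_nonneg (mul_nonneg (hf i) (hg i))] at h
  refine ⟨hsum, Summable.tsum_le_of_sum_le hsum fun s => ?_⟩
  have h1 : (∑ i ∈ s, f i * g i) ^ 2 ≤ (∑ i ∈ s, f i ^ 2) * (∑ i ∈ s, g i ^ 2) :=
    Finset.sum_mul_sq_le_sq_mul_sq s f g
  have h2 : ∑ i ∈ s, f i * g i ≤ Real.sqrt (∑ i ∈ s, f i ^ 2) * Real.sqrt (∑ i ∈ s, g i ^ 2) := by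
    have h3 := Real.sqrt_le_sqrt h1
    rwa [Real.sqrt_sq (Finset.sum_nonneg fun i _ => mul_nonneg (hf i) (hg i)),
      Real.sqrt_mul (Finset.sum_nonneg fun i _ => sq_nonneg _)] at h3
  refine h2.trans ?_
  have e1 : Real.sqrt (∑ i ∈ s, f i ^ 2) ≤ Real.sqrt (∑' i, f i ^ 2) :=
    Real.sqrt_le_sqrt (Summable.sum_le_tsum s (fun i _ => sq_nonneg _) hf2)
  have e2 : Real.sqrt (∑ i ∈ s, g i ^ 2) ≤ Real.sqrt (∑' i, g i ^ 2) :=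
    Real.sqrt_le_sqrt (Summable.sum_le_tsum s (fun i _ => sq_nonneg _) hg2)
  exact mul_le_mul e1 e2 (Real.sqrt_nonneg _) (Real.sqrt_nonneg _)

private lemma opNorm_le_sqrt_tsum (b : HilbertBasis ι ℝ H) {T : H →L[ℝ] H}
    (hT : Summable fun i => ‖T (b i)‖ ^ 2) :
    ‖T‖ ≤ Real.sqrt (∑' i, ‖T (b i)‖ ^ 2) := by
  refine T.opNorm_le_bound (Real.sqrt_nonneg _) fun x => ?_
  have hx : HasSum (fun i => ⟪b i, x⟫ • T (b i)) (T x) := by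
    have h := (b.hasSum_repr x).mapL T
    have he : (fun i => ⟪b i, x⟫ • T (b i)) = fun i => T (b.repr x i • b i) :=
      funext fun i => by rw [b.repr_apply_apply, ContinuousLinearMap.map_smul]
    rw [he]
    exact h
  have hc2 : Summable (fun i => |⟪b i, x⟫| ^ 2) := by
    refine (coeff_hasSum b x).summable.congr fun i => ?_
    rw [sq_abs, real_inner_comm]
  obtain ⟨hsm, hle⟩ := cs_tsum (f := fun i => |⟪b i, x⟫|) (g := fun i => ‖T (b i)‖)
    (fun i => abs_nonneg _) (fun i => norm_nonneg _) hc2 hT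
  have hnorm_sum : Summable fun i => ‖⟪b i, x⟫ • T (b i)‖ := by
    refine hsm.congr fun i => ?_
    rw [norm_smul, Real.norm_eq_abs]
  have h1 : ‖T x‖ ≤ ∑' i, |⟪b i, x⟫| * ‖T (b i)‖ := by
    rw [← hx.tsum_eq]
    refine (norm_tsum_le_tsum_norm hnorm_sum).trans_eq ?_
    exact tsum_congr fun i => by rw [norm_smul, Real.norm_eq_abs]
  refine h1.trans (hle.trans ?_)
  have hxn : ∑' i, |⟪b i, x⟫| ^ 2 = ‖x‖ ^ 2 := by
    rw [← (coeff_hasSum b x).tsum_eq]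
    exact tsum_congr fun i => by rw [sq_abs, real_inner_comm]
  rw [hxn, Real.sqrt_sq (norm_nonneg x), mul_comm]

end Aux

/-- The cone `𝓗⁺` of positive self-adjoint Hilbert-Schmidt operators is regular: every
nondecreasing (in the order induced by `𝓗⁺`) sequence in `𝓗` that is bounded above by some
element of `𝓗` converges in the Hilbert-Schmidt norm (to a self-adjoint
Hilbert-Schmidt operator). -/
theorem regular_cone_positive_HS
    {H : Type*} [NormedAddCommGroup H] [InnerProductSpace ℝ H] [CompleteSpace H]
    {ι : Type*} [Countable ι] (b : HilbertBasis ι ℝ H)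
    (A : ℕ → H →L[ℝ] H)
    (hA_sa : ∀ n, IsSelfAdjoint (A n))
    (hA_HS : ∀ n, Summable fun i => ‖A n (b i)‖ ^ 2)
    (hmono : ∀ n, ∀ h : H, 0 ≤ ⟪(A (n + 1) - A n) h, h⟫)
    (Abd : H →L[ℝ] H) (hAbd_sa : IsSelfAdjoint Abd)
    (hAbd_HS : Summable fun i => ‖Abd (b i)‖ ^ 2)
    (hbd : ∀ n, ∀ h : H, 0 ≤ ⟪(Abd - A n) h, h⟫) :
    ∃ L : H →L[ℝ] H, IsSelfAdjoint L ∧ (Summable fun i => ‖L (b i)‖ ^ 2) ∧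
      Filter.Tendsto (fun n => ∑' i, ‖(A n - L) (b i)‖ ^ 2) Filter.atTop (nhds 0) := by
  classical
  -- positivity of differences
  have hpos_diff : ∀ n m : ℕ, n ≤ m → ∀ h : H, 0 ≤ ⟪(A m - A n) h, h⟫ := by
    intro n m hnm
    induction m, hnm using Nat.le_induction with
    | base => intro h; simp
    | succ m hm ih =>
        intro h
        have he : A (m + 1) - A n = (A (m + 1) - A m) + (A m - A n) := by abel
        rw [he, ContinuousLinearMap.add_apply, inner_add_left]
        exact add_nonneg (hmono m h) (ih h)
  -- Hilbert-Schmidt property of differences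
  have hHS_diff : ∀ X Y : H →L[ℝ] H, (Summable fun i => ‖X (b i)‖ ^ 2) →
      (Summable fun i => ‖Y (b i)‖ ^ 2) → Summable fun i => ‖(X - Y) (b i)‖ ^ 2 := by
    intro X Y hX hY
    refine Summable.of_nonneg_of_le (fun i => sq_nonneg _) (fun i => ?_)
      (((hX.add hY).mul_left 2))
    have h1 : ‖(X - Y) (b i)‖ ≤ ‖X (b i)‖ + ‖Y (b i)‖ := by
      rw [ContinuousLinearMap.sub_apply]
      exact norm_sub_le _ _
    have h2 : ‖(X - Y) (b i)‖ ^ 2 ≤ (‖X (b i)‖ + ‖Y (b i)‖) ^ 2 :=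
      pow_le_pow_left₀ (norm_nonneg _) h1 2
    nlinarith [sq_nonneg (‖X (b i)‖ - ‖Y (b i)‖)]
  set D : H →L[ℝ] H := Abd - A 0 with hD
  have hD_sa : IsSelfAdjoint D := hAbd_sa.sub (hA_sa 0)
  have hD_HS : Summable fun i => ‖D (b i)‖ ^ 2 := hHS_diff Abd (A 0) hAbd_HS (hA_HS 0)
  have hD_pos : ∀ h : H, 0 ≤ ⟪D h, h⟫ := hbd 0
  set t : ℕ → ℝ := fun n => HSpair b (A n) D with ht
  have hdiff_formula : ∀ n m : ℕ, HSpair b (A m - A n) D = t m - t n := fun n m =>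
    HSpair_sub_left b (hA_HS m) (hA_HS n) hD_HS
  -- t is monotone
  have ht_mono : Monotone t := by
    refine monotone_nat_of_le_succ fun n => ?_
    have h1 : 0 ≤ HSpair b (A (n + 1) - A n) D :=
      HSpair_nonneg b ((hA_sa (n + 1)).sub (hA_sa n)) hD_sa (hmono n) hD_pos
        (hHS_diff _ _ (hA_HS (n + 1)) (hA_HS n)) hD_HS
    rw [hdiff_formula] at h1
    linarith
  -- t is bounded above
  have ht_bdd : ∀ n, t n ≤ HSpair b Abd D := by
    intro n
    have h1 : 0 ≤ HSpair b (Abd - A n) D :=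
      HSpair_nonneg b (hAbd_sa.sub (hA_sa n)) hD_sa (hbd n) hD_pos
        (hHS_diff _ _ hAbd_HS (hA_HS n)) hD_HS
    rw [HSpair_sub_left b hAbd_HS (hA_HS n) hD_HS] at h1
    linarith
  have ht_conv : Filter.Tendsto t Filter.atTop (nhds (⨆ n, t n)) :=
    tendsto_atTop_ciSup ht_mono ⟨HSpair b Abd D, by rintro x ⟨n, rfl⟩; exact ht_bdd n⟩
  have ht_cauchy : CauchySeq t := ht_conv.cauchySeq
  -- key Hilbert-Schmidt estimate
  have key : ∀ n m : ℕ, n ≤ m → ∑' i, ‖(A m - A n) (b i)‖ ^ 2 ≤ t m - t n := by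
    intro n m hnm
    set X : H →L[ℝ] H := A m - A n with hX
    have hXsa : IsSelfAdjoint X := (hA_sa m).sub (hA_sa n)
    have hXHS : Summable fun i => ‖X (b i)‖ ^ 2 := hHS_diff _ _ (hA_HS m) (hA_HS n)
    have hXpos : ∀ h : H, 0 ≤ ⟪X h, h⟫ := hpos_diff n m hnm
    have hDXsa : IsSelfAdjoint (D - X) := hD_sa.sub hXsa
    have hDXHS : Summable fun i => ‖(D - X) (b i)‖ ^ 2 := hHS_diff _ _ hD_HS hXHS
    have hDXpos : ∀ h : H, 0 ≤ ⟪(D - X) h, h⟫ := by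
      intro h
      have he : D - X = (Abd - A m) + (A n - A 0) := by rw [hD, hX]; abel
      rw [he, ContinuousLinearMap.add_apply, inner_add_left]
      exact add_nonneg (hbd m h) (hpos_diff 0 n (Nat.zero_le n) h)
    have h1 : 0 ≤ HSpair b (D - X) X :=
      HSpair_nonneg b hDXsa hXsa hDXpos hXpos hDXHS hXHS
    rw [HSpair_sub_left b hD_HS hXHS hXHS] at h1
    have h2 : HSpair b X X = ∑' i, ‖X (b i)‖ ^ 2 := HSpair_self b hXHS
    have h3 : HSpair b X D = t m - t n := hdiff_formula n m
    have h4 : HSpair b D X = HSpair b X D := HSpair_comm b D X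
    linarith
  -- symmetry of the HS distance
  have hsymm : ∀ m n : ℕ, (∑' i, ‖(A m - A n) (b i)‖ ^ 2) = ∑' i, ‖(A n - A m) (b i)‖ ^ 2 := by
    intro m n
    refine tsum_congr fun i => ?_
    have : (A m - A n) (b i) = -((A n - A m) (b i)) := by
      simp [ContinuousLinearMap.sub_apply]
    rw [this, norm_neg]
  -- HS-Cauchy property
  have hHSC : ∀ ε : ℝ, 0 < ε → ∃ N, ∀ m ≥ N, ∀ n ≥ N,
      ∑' i, ‖(A m - A n) (b i)‖ ^ 2 ≤ ε := by
    intro ε hε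
    obtain ⟨N, hN⟩ := Metric.cauchySeq_iff.mp ht_cauchy ε hε
    refine ⟨N, fun m hm n hn => ?_⟩
    rcases le_total n m with h | h
    · refine (key n m h).trans ?_
      have := hN m hm n hn
      rw [Real.dist_eq] at this
      have := abs_lt.mp this
      linarith [this.2]
    · rw [hsymm]
      refine (key m n h).trans ?_
      have := hN n hn m hm
      rw [Real.dist_eq] at this
      have := abs_lt.mp this
      linarith [this.2]
  -- the operator sequence is Cauchy in operator norm
  have hACauchy : CauchySeq A := by
    rw [Metric.cauchySeq_iff]
    intro ε hε
    obtain ⟨N, hN⟩ := hHSC ((ε / 2) ^ 2) (by positivity)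
    refine ⟨N, fun m hm n hn => ?_⟩
    have h1 : ‖A m - A n‖ ≤ Real.sqrt (∑' i, ‖(A m - A n) (b i)‖ ^ 2) :=
      opNorm_le_sqrt_tsum b (hHS_diff _ _ (hA_HS m) (hA_HS n))
    have h2 : Real.sqrt (∑' i, ‖(A m - A n) (b i)‖ ^ 2) ≤ Real.sqrt ((ε / 2) ^ 2) :=
      Real.sqrt_le_sqrt (hN m hm n hn)
    rw [Real.sqrt_sq (by positivity : (0:ℝ) ≤ ε / 2)] at h2
    rw [dist_eq_norm]
    calc ‖A m - A n‖ ≤ ε / 2 := h1.trans h2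
      _ < ε := by linarith
  obtain ⟨L, hL⟩ := cauchySeq_tendsto_of_complete hACauchy
  -- pointwise convergence
  have hpt : ∀ x : H, Filter.Tendsto (fun n => A n x) Filter.atTop (nhds (L x)) := by
    intro x
    exact ((ContinuousLinearMap.apply ℝ H x).continuous.tendsto L).comp hL
  -- L is self-adjoint
  have hLsa : IsSelfAdjoint L := by
    rw [ContinuousLinearMap.isSelfAdjoint_iff_isSymmetric]
    intro x y
    have h1 : Filter.Tendsto (fun n => ⟪A n x, y⟫) Filter.atTop (nhds ⟪L x, y⟫) :=
      (hpt x).inner tendsto_const_nhds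
    have h2 : Filter.Tendsto (fun n => ⟪A n x, y⟫) Filter.atTop (nhds ⟪x, L y⟫) := by
      have h3 : Filter.Tendsto (fun n => ⟪x, A n y⟫) Filter.atTop (nhds ⟪x, L y⟫) :=
        tendsto_const_nhds.inner (hpt y)
      refine h3.congr fun n => ?_
      have := ContinuousLinearMap.isSelfAdjoint_iff_isSymmetric.mp (hA_sa n) x y
      simp only [ContinuousLinearMap.coe_coe] at this
      exact this.symm
    have := tendsto_nhds_unique h1 h2
    simp only [ContinuousLinearMap.coe_coe]
    exact this
  -- control of the HS distance to the limit
  have hlim : ∀ ε : ℝ, 0 < ε → ∃ N, ∀ n ≥ N,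
      (Summable fun i => ‖(A n - L) (b i)‖ ^ 2) ∧ ∑' i, ‖(A n - L) (b i)‖ ^ 2 ≤ ε := by
    intro ε hε
    obtain ⟨N, hN⟩ := hHSC ε hε
    refine ⟨N, fun n hn => ?_⟩
    have hfin : ∀ s : Finset ι, ∑ i ∈ s, ‖(A n - L) (b i)‖ ^ 2 ≤ ε := by
      intro s
      have hconv : Filter.Tendsto (fun m => ∑ i ∈ s, ‖(A n - A m) (b i)‖ ^ 2) Filter.atTop
          (nhds (∑ i ∈ s, ‖(A n - L) (b i)‖ ^ 2)) := by
        refine tendsto_finset_sum s fun i _ => ?_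
        have h1 : Filter.Tendsto (fun m => (A n - A m) (b i)) Filter.atTop
            (nhds ((A n - L) (b i))) := by
          simp only [ContinuousLinearMap.sub_apply]
          exact tendsto_const_nhds.sub (hpt (b i))
        exact (h1.norm).pow 2
      refine le_of_tendsto hconv ?_
      filter_upwards [Filter.eventually_ge_atTop N] with m hm
      refine le_trans (Summable.sum_le_tsum s (fun i _ => sq_nonneg _)
        (hHS_diff _ _ (hA_HS n) (hA_HS m))) (hN n hn m hm)
    have hsummable : Summable fun i => ‖(A n - L) (b i)‖ ^ 2 :=
      summable_of_sum_le (fun i => sq_nonneg _) hfin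
    exact ⟨hsummable, Summable.tsum_le_of_sum_le hsummable hfin⟩
  refine ⟨L, hLsa, ?_, ?_⟩
  · obtain ⟨N, hN⟩ := hlim 1 one_pos
    have h1 := (hN N le_rfl).1
    have h2 := hHS_diff (A N) (A N - L) (hA_HS N) h1
    refine h2.congr fun i => ?_
    have : A N - (A N - L) = L := by abel
    rw [this]
  · rw [Metric.tendsto_atTop]
    intro ε hε
    obtain ⟨N, hN⟩ := hlim (ε / 2) (by positivity)
    refine ⟨N, fun n hn => ?_⟩
    have h := hN n hn
    have h0 : 0 ≤ ∑' i, ‖(A n - L) (b i)‖ ^ 2 := tsum_nonneg fun i => sq_nonneg _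
    rw [Real.dist_eq, sub_zero, abs_of_nonneg h0]
    linarith [h.2]
end

section
/- If the Laplace transforms of two finite Borel measures on \(\mathbb{R}^n\) supported in \([0,\infty)^n\) agree on \([0,\infty)^n\), then the measures are equal. That is, if \(\mu_1, \mu_2\) are finite Borel measures on \(\mathbb{R}^n\) with support contained in \([0,\infty)^n\) and \(\int e^{-\langle x,y\rangle}\,\mu_1(dx) = \int e^{-\langle x,y\rangle}\,\mu_2(dx)\) for all \(y \in [0,\infty)^n\), then \(\mu_1 = \mu_2\). -/
open MeasureTheory

section LaplaceAux

variable {α : Type*} [MeasurableSpace α] [TopologicalSpace α] [OpensMeasurableSpace α]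

lemma laplaceAux_integrable (ν : Measure α) [IsFiniteMeasure ν] {K : Set α}
    (hK : IsCompact K) (hν : ν Kᶜ = 0) {q : α → ℝ} (hq : Continuous q) :
    Integrable q ν := by
  obtain ⟨C, hC⟩ := hK.exists_bound_of_continuousOn hq.continuousOn
  refine (integrable_const C).mono' hq.aestronglyMeasurable ?_
  rw [MeasureTheory.ae_iff]
  refine measure_mono_null (fun x hx => ?_) hν
  simp only [Set.mem_setOf_eq, not_le] at hx
  intro hxK
  exact absurd (hC x hxK) (not_le.mpr hx)

omit [TopologicalSpace α] [OpensMeasurableSpace α] in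
lemma laplaceAux_abs_sub (ν : Measure α) [IsFiniteMeasure ν] {K : Set α}
    (hν : ν Kᶜ = 0) {q₁ q₂ : α → ℝ} (h₁ : Integrable q₁ ν) (h₂ : Integrable q₂ ν) {ε : ℝ}
    (hle : ∀ x ∈ K, |q₁ x - q₂ x| ≤ ε) :
    |∫ x, q₁ x ∂ν - ∫ x, q₂ x ∂ν| ≤ ε * (ν Set.univ).toReal := by
  rw [← integral_sub h₁ h₂]
  have := norm_integral_le_of_norm_le_const (μ := ν) (C := ε)
    (f := fun x => q₁ x - q₂ x) ?_
  · simpa [Measure.real] using this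
  · rw [MeasureTheory.ae_iff]
    refine measure_mono_null (fun x hx => ?_) hν
    simp only [Set.mem_setOf_eq, not_le] at hx
    intro hxK
    exact absurd (hle x hxK) (not_le.mpr (by simpa using hx))

end LaplaceAux

/-- If the Laplace transforms of two finite Borel measures on `ℝⁿ`, supported in `[0,∞)ⁿ`,
agree on `[0,∞)ⁿ`, then the measures are equal. -/
theorem laplace_transform_determines_measure_Rn
    {n : ℕ} (μ₁ μ₂ : Measure (EuclideanSpace ℝ (Fin n)))
    [IsFiniteMeasure μ₁] [IsFiniteMeasure μ₂]
    (hsupp₁ : μ₁ {x | ¬ ∀ i, 0 ≤ x i} = 0) (hsupp₂ : μ₂ {x | ¬ ∀ i, 0 ≤ x i} = 0)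
    (hLap : ∀ y : EuclideanSpace ℝ (Fin n), (∀ i, 0 ≤ y i) →
      ∫ x, Real.exp (-(∑ i, x i * y i)) ∂μ₁ = ∫ x, Real.exp (-(∑ i, x i * y i)) ∂μ₂) :
    μ₁ = μ₂ := by
  classical
  have hcont : ∀ i : Fin n, Continuous fun x : EuclideanSpace ℝ (Fin n) => x i :=
    fun i => (EuclideanSpace.proj (𝕜 := ℝ) i).continuous
  set φ : EuclideanSpace ℝ (Fin n) → EuclideanSpace ℝ (Fin n) :=
    fun x => (EuclideanSpace.equiv (Fin n) ℝ).symm fun i => Real.exp (-(x i)) with hφdef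
  have hφapp : ∀ (x : EuclideanSpace ℝ (Fin n)) (i : Fin n),
      φ x i = Real.exp (-(x i)) := fun x i => rfl
  have hφc : Continuous φ :=
    (EuclideanSpace.equiv (Fin n) ℝ).symm.continuous.comp
      (continuous_pi fun i => Real.continuous_exp.comp (hcont i).neg)
  have hφm : Measurable φ := hφc.measurable
  have hφinj : Function.Injective φ := by
    intro a b hab
    ext i
    have h := congrFun (congrArg (fun z => ((EuclideanSpace.equiv (Fin n) ℝ) z : Fin n → ℝ)) hab) i
    simp only [hφdef, ContinuousLinearEquiv.apply_symm_apply] at h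
    have := Real.exp_eq_exp.mp h
    linarith
  have hφe : MeasurableEmbedding φ := hφm.measurableEmbedding hφinj
  haveI : IsFiniteMeasure (μ₁.map φ) := Measure.isFiniteMeasure_map μ₁ φ
  haveI : IsFiniteMeasure (μ₂.map φ) := Measure.isFiniteMeasure_map μ₂ φ
  set ν₁ := μ₁.map φ with hν₁def
  set ν₂ := μ₂.map φ with hν₂def
  set K : Set (EuclideanSpace ℝ (Fin n)) := {z | ∀ i, z i ∈ Set.Icc (0:ℝ) 1} with hKdef
  have hKclosed : IsClosed K := by
    have : K = ⋂ i, (fun z : EuclideanSpace ℝ (Fin n) => z i) ⁻¹' Set.Icc (0:ℝ) 1 := by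
      ext z; simp [hKdef]
    rw [this]
    exact isClosed_iInter fun i => IsClosed.preimage (hcont i) isClosed_Icc
  have hKcompact : IsCompact K := by
    have himg : K = (EuclideanSpace.equiv (Fin n) ℝ).symm ''
        (Set.univ.pi fun _ : Fin n => Set.Icc (0:ℝ) 1) := by
      ext z
      constructor
      · intro hz
        exact ⟨(EuclideanSpace.equiv (Fin n) ℝ) z, fun i _ => hz i, by simp⟩
      · rintro ⟨w, hw, rfl⟩ i
        exact hw i (Set.mem_univ i)
    rw [himg]
    exact (isCompact_univ_pi fun _ => isCompact_Icc).image
      (EuclideanSpace.equiv (Fin n) ℝ).symm.continuous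
  -- the image measures are carried by K
  have hcarrier : ∀ (μ : Measure (EuclideanSpace ℝ (Fin n))),
      μ {x | ¬ ∀ i, 0 ≤ x i} = 0 → (μ.map φ) Kᶜ = 0 := by
    intro μ hs
    rw [Measure.map_apply hφm hKclosed.measurableSet.compl]
    refine measure_mono_null (fun x hx => ?_) hs
    simp only [Set.mem_preimage, Set.mem_compl_iff, Set.mem_setOf_eq, hKdef] at hx ⊢
    intro hxall
    refine hx fun i => ⟨(Real.exp_pos _).le, ?_⟩
    rw [hφapp]
    exact Real.exp_le_one_iff.mpr (neg_nonpos.mpr (hxall i))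
  have hν₁K : ν₁ Kᶜ = 0 := hcarrier μ₁ hsupp₁
  have hν₂K : ν₂ Kᶜ = 0 := hcarrier μ₂ hsupp₂
  -- monomials are continuous
  have hmc : ∀ k : Fin n → ℕ,
      Continuous fun z : EuclideanSpace ℝ (Fin n) => ∏ i, z i ^ k i :=
    fun k => continuous_finset_prod _ fun i _ => (hcont i).pow _
  -- equal moments
  have hmom : ∀ k : Fin n → ℕ,
      ∫ z, (∏ i, z i ^ k i) ∂ν₁ = ∫ z, (∏ i, z i ^ k i) ∂ν₂ := by
    intro k
    rw [hν₁def, hν₂def,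
      integral_map hφm.aemeasurable (hmc k).aestronglyMeasurable,
      integral_map hφm.aemeasurable (hmc k).aestronglyMeasurable]
    have hfun : ∀ x : EuclideanSpace ℝ (Fin n),
        (∏ i, φ x i ^ k i) = Real.exp (-(∑ i, x i * ((k i : ℝ)))) := by
      intro x
      have : ∀ i : Fin n, φ x i ^ k i = Real.exp ((k i : ℝ) * -(x i)) := by
        intro i
        rw [hφapp, ← Real.exp_nat_mul]
      simp_rw [this, ← Real.exp_sum]
      congr 1
      rw [← Finset.sum_neg_distrib]
      exact Finset.sum_congr rfl fun i _ => by ring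
    simp_rw [hfun]
    exact hLap ((EuclideanSpace.equiv (Fin n) ℝ).symm fun i => (k i : ℝ))
      (fun i => Nat.cast_nonneg _)
  -- the subalgebra generated by coordinates
  set coordFn : Fin n → C(EuclideanSpace ℝ (Fin n), ℝ) :=
    fun i => ⟨fun z => z i, hcont i⟩ with hcoordDef
  set A : Subalgebra ℝ C(EuclideanSpace ℝ (Fin n), ℝ) :=
    Algebra.adjoin ℝ (Set.range coordFn) with hAdef
  have hA : ∀ q : C(EuclideanSpace ℝ (Fin n), ℝ), q ∈ A →
      Integrable (q : EuclideanSpace ℝ (Fin n) → ℝ) ν₁ ∧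
      Integrable (q : EuclideanSpace ℝ (Fin n) → ℝ) ν₂ ∧
      ∫ z, q z ∂ν₁ = ∫ z, q z ∂ν₂ := by
    intro q hq
    have hq' : q ∈ Submodule.span ℝ
        ((Submonoid.closure (Set.range coordFn) : Submonoid C(EuclideanSpace ℝ (Fin n), ℝ)) :
          Set C(EuclideanSpace ℝ (Fin n), ℝ)) := by
      rw [← Algebra.adjoin_eq_span]
      exact hq
    clear hq
    induction hq' using Submodule.span_induction with
    | mem x hx =>
      -- x is a monomial
      have hmonef : ∃ k : Fin n → ℕ, ∀ z, x z = ∏ i, z i ^ k i := by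
        induction hx using Submonoid.closure_induction with
        | mem y hy =>
          obtain ⟨i, rfl⟩ := hy
          refine ⟨Pi.single i 1, fun z => ?_⟩
          rw [Finset.prod_eq_single i (fun j _ hj => by simp [Pi.single_eq_of_ne hj])
            (by simp)]
          simp [hcoordDef]
        | one => exact ⟨0, fun z => by simp⟩
        | mul a b _ _ iha ihb =>
          obtain ⟨ka, hka⟩ := iha
          obtain ⟨kb, hkb⟩ := ihb
          refine ⟨ka + kb, fun z => ?_⟩
          simp only [ContinuousMap.mul_apply, hka, hkb, Pi.add_apply, pow_add,
            ← Finset.prod_mul_distrib]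
      obtain ⟨k, hk⟩ := hmonef
      have hxc : Continuous (x : EuclideanSpace ℝ (Fin n) → ℝ) := x.continuous
      refine ⟨laplaceAux_integrable ν₁ hKcompact hν₁K hxc,
        laplaceAux_integrable ν₂ hKcompact hν₂K hxc, ?_⟩
      have : (x : EuclideanSpace ℝ (Fin n) → ℝ) = fun z => ∏ i, z i ^ k i := funext hk
      rw [this]
      exact hmom k
    | zero =>
      exact ⟨integrable_zero _ _ ν₁, integrable_zero _ _ ν₂, by simp⟩
    | add a b _ _ iha ihb =>
      refine ⟨?_, ?_, ?_⟩
      · simpa using iha.1.add ihb.1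
      · simpa using iha.2.1.add ihb.2.1
      · simp only [ContinuousMap.add_apply]
        rw [integral_add iha.1 ihb.1, integral_add iha.2.1 ihb.2.1, iha.2.2, ihb.2.2]
    | smul c a _ iha =>
      refine ⟨?_, ?_, ?_⟩
      · simpa using iha.1.smul c
      · simpa using iha.2.1.smul c
      · simp only [ContinuousMap.smul_apply, smul_eq_mul]
        rw [integral_const_mul, integral_const_mul, iha.2.2]
  -- equal integrals of all continuous functions
  have hint : ∀ g : EuclideanSpace ℝ (Fin n) → ℝ, Continuous g →
      ∫ z, g z ∂ν₁ = ∫ z, g z ∂ν₂ := by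
    intro g hg
    have hint₁ := laplaceAux_integrable ν₁ hKcompact hν₁K hg
    have hint₂ := laplaceAux_integrable ν₂ hKcompact hν₂K hg
    set C : ℝ := (ν₁ Set.univ).toReal + (ν₂ Set.univ).toReal with hCdef
    have hC0 : 0 ≤ C := by positivity
    have key : ∀ ε : ℝ, 0 < ε → |∫ z, g z ∂ν₁ - ∫ z, g z ∂ν₂| ≤ ε := by
      intro ε hε
      set δ : ℝ := ε / (C + 1) with hδdef
      have hδ : 0 < δ := by positivity
      -- Stone-Weierstrass on K
      haveI : CompactSpace K := isCompact_iff_compactSpace.mp hKcompact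
      set res : C(EuclideanSpace ℝ (Fin n), ℝ) →ₐ[ℝ] C(K, ℝ) :=
        ContinuousMap.compRightAlgHom ℝ ℝ ⟨Subtype.val, continuous_subtype_val⟩ with hresDef
      set B : Subalgebra ℝ C(K, ℝ) := A.map res with hBdef
      have hBsep : B.SeparatesPoints := by
        intro x y hxy
        have : (x : EuclideanSpace ℝ (Fin n)) ≠ (y : EuclideanSpace ℝ (Fin n)) :=
          fun h => hxy (Subtype.ext h)
        obtain ⟨i, hi⟩ : ∃ i, (x : EuclideanSpace ℝ (Fin n)) i ≠ (y : EuclideanSpace ℝ (Fin n)) i := by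
          by_contra hc
          push_neg at hc
          exact this (by ext i; exact hc i)
        refine ⟨(res (coordFn i) : K → ℝ), ⟨res (coordFn i), ?_, rfl⟩, ?_⟩
        · exact Subalgebra.mem_map.mpr ⟨coordFn i, Algebra.subset_adjoin ⟨i, rfl⟩, rfl⟩
        · simpa [hresDef, hcoordDef, ContinuousMap.compRightAlgHom] using hi
      obtain ⟨p, hp⟩ := ContinuousMap.exists_mem_subalgebra_near_continuous_of_separatesPoints
        B hBsep (fun z : K => g z) (hg.comp continuous_subtype_val) δ hδ
      obtain ⟨q, hqA, hqp⟩ := Subalgebra.mem_map.mp p.2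
      have hqK : ∀ z ∈ K, |g z - q z| ≤ δ := by
        intro z hz
        have := hp ⟨z, hz⟩
        rw [← hqp] at this
        have h2 : (res q : K → ℝ) ⟨z, hz⟩ = q z := rfl
        rw [Real.norm_eq_abs] at this
        rw [abs_sub_comm]
        calc |(q z : ℝ) - g z| = |(res q : K → ℝ) ⟨z, hz⟩ - g z| := by rw [h2]
        _ ≤ δ := le_of_lt this
      obtain ⟨hq1, hq2, hq3⟩ := hA q hqA
      have e₁ : |∫ z, g z ∂ν₁ - ∫ z, q z ∂ν₁| ≤ δ * (ν₁ Set.univ).toReal :=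
        laplaceAux_abs_sub ν₁ hν₁K hint₁ hq1 hqK
      have e₂ : |∫ z, g z ∂ν₂ - ∫ z, q z ∂ν₂| ≤ δ * (ν₂ Set.univ).toReal :=
        laplaceAux_abs_sub ν₂ hν₂K hint₂ hq2 hqK
      have : |∫ z, g z ∂ν₁ - ∫ z, g z ∂ν₂| ≤ δ * C := by
        rw [hCdef, mul_add]
        calc |∫ z, g z ∂ν₁ - ∫ z, g z ∂ν₂|
            = |(∫ z, g z ∂ν₁ - ∫ z, q z ∂ν₁) - (∫ z, g z ∂ν₂ - ∫ z, q z ∂ν₂)| := by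
              rw [hq3]; ring_nf
          _ ≤ |∫ z, g z ∂ν₁ - ∫ z, q z ∂ν₁| + |∫ z, g z ∂ν₂ - ∫ z, q z ∂ν₂| := abs_sub _ _
          _ ≤ δ * (ν₁ Set.univ).toReal + δ * (ν₂ Set.univ).toReal := add_le_add e₁ e₂
      refine this.trans ?_
      rw [hδdef, div_mul_eq_mul_div, div_le_iff₀ (by positivity)]
      nlinarith
    by_contra hne
    have hpos : 0 < |∫ z, g z ∂ν₁ - ∫ z, g z ∂ν₂| :=
      abs_pos.mpr (sub_ne_zero.mpr hne)
    have := key (|∫ z, g z ∂ν₁ - ∫ z, g z ∂ν₂| / 2) (by linarith)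
    linarith
  -- conclude ν₁ = ν₂
  have hν : ν₁ = ν₂ := by
    apply ext_of_forall_lintegral_eq_of_IsFiniteMeasure
    intro f
    have hiso : Isometry ((↑) : NNReal → ℝ) := fun _ _ => rfl
    have hgc : Continuous fun z => ((f z : ℝ)) :=
      NNReal.continuous_coe.comp f.continuous
    have hi₁ : Integrable (fun z => ((f z : ℝ))) ν₁ :=
      laplaceAux_integrable ν₁ hKcompact hν₁K hgc
    have hi₂ : Integrable (fun z => ((f z : ℝ))) ν₂ :=
      laplaceAux_integrable ν₂ hKcompact hν₂K hgc
    rw [lintegral_coe_eq_integral _ hi₁, lintegral_coe_eq_integral _ hi₂,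
      hint _ hgc]
  -- conclude μ₁ = μ₂
  ext s hs
  have h1 : μ₁ s = ν₁ (φ '' s) := by
    rw [hν₁def, hφe.map_apply, hφinj.preimage_image]
  have h2 : μ₂ s = ν₂ (φ '' s) := by
    rw [hν₂def, hφe.map_apply, hφinj.preimage_image]
  rw [h1, h2, hν]
end
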